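/- Let (e_0, e_1) be the standard basis of ℂ², write ā = 1 − a for a ∈ {0,1}, and let ψ'' = (1/(2√2)) Σ_{a,b ∈ {0,1}} ( e_a ⊗ e_b ⊗ e_b ⊗ e_a + e_a ⊗ e_b ⊗ e_{b̄} ⊗ e_{ā} ), a unit vector in (ℂ²)^{⊗4}. Then the reduced density matrix of |ψ''⟩⟨ψ''| on the tensor factors (1,4) equals the separable density matrix ¼ (e_0⊗e_0 + e_1⊗e_1)(e_0⊗e_0 + e_1⊗e_1)* + ¼ (e_0⊗e_1 + e_1⊗e_0)(e_0⊗e_1 + e_1⊗e_0)*, and the reduced density matrix on the factors (1,2) has exactly the two nonzero eigenvalues ½ and ½, hence von Neumann entropy log 2. -/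

import Mathlib

open scoped BigOperators ComplexOrder

/-- Von Neumann entropy of a (Hermitian) matrix: `-∑ λᵢ log λᵢ` over the eigenvalues,
with the convention that it is `0` for non-Hermitian matrices. -/
noncomputable def vNEntropy {n : Type*} [Fintype n] [DecidableEq n] (ρ : Matrix n n ℂ) : ℝ :=
  if h : ρ.IsHermitian then -∑ i, h.eigenvalues i * Real.log (h.eigenvalues i) else 0

/-- A density matrix: positive semidefinite with trace 1. -/
noncomputable def IsDensityMatrix {n : Type*} [Fintype n] [DecidableEq n] (ρ : Matrix n n ℂ) : Prop :=
  ρ.PosSemidef ∧ ρ.trace = 1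

/-- The pure density matrix `|ψ⟩⟨ψ|` associated to a vector `ψ`. -/
noncomputable def pureState {n : Type*} (ψ : n → ℂ) : Matrix n n ℂ :=
  Matrix.of fun p q => ψ p * star (ψ q)

variable {d₁ d₂ d₃ d₄ : ℕ}

/-- Reduced density matrix on factor 1 (partial trace over factors 2,3,4). -/
noncomputable def pt1 (ρ : Matrix (Fin d₁ × Fin d₂ × Fin d₃ × Fin d₄) (Fin d₁ × Fin d₂ × Fin d₃ × Fin d₄) ℂ) :
    Matrix (Fin d₁) (Fin d₁) ℂ :=
  Matrix.of fun i i' =>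
    ∑ b : Fin d₂, ∑ c : Fin d₃, ∑ k : Fin d₄, ρ (i, b, c, k) (i', b, c, k)

/-- Reduced density matrix on factor 3 (partial trace over factors 1,2,4). -/
noncomputable def pt3 (ρ : Matrix (Fin d₁ × Fin d₂ × Fin d₃ × Fin d₄) (Fin d₁ × Fin d₂ × Fin d₃ × Fin d₄) ℂ) :
    Matrix (Fin d₃) (Fin d₃) ℂ :=
  Matrix.of fun c c' =>
    ∑ i : Fin d₁, ∑ b : Fin d₂, ∑ k : Fin d₄, ρ (i, b, c, k) (i, b, c', k)

/-- Reduced density matrix on factor 4 (partial trace over factors 1,2,3). -/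
noncomputable def pt4 (ρ : Matrix (Fin d₁ × Fin d₂ × Fin d₃ × Fin d₄) (Fin d₁ × Fin d₂ × Fin d₃ × Fin d₄) ℂ) :
    Matrix (Fin d₄) (Fin d₄) ℂ :=
  Matrix.of fun k k' =>
    ∑ i : Fin d₁, ∑ b : Fin d₂, ∑ c : Fin d₃, ρ (i, b, c, k) (i, b, c, k')

/-- Reduced density matrix on factors (1,2) (partial trace over factors 3,4). -/
noncomputable def pt12 (ρ : Matrix (Fin d₁ × Fin d₂ × Fin d₃ × Fin d₄) (Fin d₁ × Fin d₂ × Fin d₃ × Fin d₄) ℂ) :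
    Matrix (Fin d₁ × Fin d₂) (Fin d₁ × Fin d₂) ℂ :=
  Matrix.of fun p q =>
    ∑ c : Fin d₃, ∑ k : Fin d₄, ρ (p.1, p.2, c, k) (q.1, q.2, c, k)

/-- Reduced density matrix on factors (1,4) (partial trace over factors 2,3). -/
noncomputable def pt14 (ρ : Matrix (Fin d₁ × Fin d₂ × Fin d₃ × Fin d₄) (Fin d₁ × Fin d₂ × Fin d₃ × Fin d₄) ℂ) :
    Matrix (Fin d₁ × Fin d₄) (Fin d₁ × Fin d₄) ℂ :=
  Matrix.of fun p q =>
    ∑ b : Fin d₂, ∑ c : Fin d₃, ρ (p.1, b, c, p.2) (q.1, b, c, q.2)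

/-- Reduced density matrix on factors (3,4) (partial trace over factors 1,2). -/
noncomputable def pt34 (ρ : Matrix (Fin d₁ × Fin d₂ × Fin d₃ × Fin d₄) (Fin d₁ × Fin d₂ × Fin d₃ × Fin d₄) ℂ) :
    Matrix (Fin d₃ × Fin d₄) (Fin d₃ × Fin d₄) ℂ :=
  Matrix.of fun p q =>
    ∑ i : Fin d₁, ∑ b : Fin d₂, ρ (i, b, p.1, p.2) (i, b, q.1, q.2)

/-- The standard basis vectors of `ℂ²`: `stdBasis a i = δ_{i a}`. -/
noncomputable def stdBasis (a : Fin 2) : Fin 2 → ℂ := fun i => if i = a then 1 else 0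

/-- The vector `ψ'' = (1/(2√2)) ∑_{a,b} (e_a⊗e_b⊗e_b⊗e_a + e_a⊗e_b⊗e_{b̄}⊗e_{ā})`
in `(ℂ²)^{⊗4}`, where `x̄ = 1 - x`. -/
noncomputable def ψSep : Fin 2 × Fin 2 × Fin 2 × Fin 2 → ℂ := fun p =>
  (1 / (2 * Real.sqrt 2 : ℝ) : ℂ) * ∑ a : Fin 2, ∑ b : Fin 2,
    (stdBasis a p.1 * stdBasis b p.2.1 * stdBasis b p.2.2.1 * stdBasis a p.2.2.2 +
     stdBasis a p.1 * stdBasis b p.2.1 * stdBasis (1 - b) p.2.2.1 * stdBasis (1 - a) p.2.2.2)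

/-- The (unnormalized) vector `e₀⊗e₀ + e₁⊗e₁` in `ℂ² ⊗ ℂ²`. -/
noncomputable def u₁ : Fin 2 × Fin 2 → ℂ := fun p =>
  stdBasis 0 p.1 * stdBasis 0 p.2 + stdBasis 1 p.1 * stdBasis 1 p.2

/-- The (unnormalized) vector `e₀⊗e₁ + e₁⊗e₀` in `ℂ² ⊗ ℂ²`. -/
noncomputable def u₂ : Fin 2 × Fin 2 → ℂ := fun p =>
  stdBasis 0 p.1 * stdBasis 1 p.2 + stdBasis 1 p.1 * stdBasis 0 p.2


/-! ### Auxiliary lemmas -/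

noncomputable def χAux : Fin 2 × Fin 2 × Fin 2 × Fin 2 → ℂ := fun p =>
  if (p.2.2.1 = p.2.1 ∧ p.2.2.2 = p.1) ∨ (p.2.2.1 = 1 - p.2.1 ∧ p.2.2.2 = 1 - p.1) then 1 else 0

lemma hval (p : Fin 2 × Fin 2 × Fin 2 × Fin 2) :
    ψSep p = ((1 / (2 * Real.sqrt 2 : ℝ) : ℝ) : ℂ) * χAux p := by
  fin_cases p <;> simp [ψSep, stdBasis, χAux, Fin.sum_univ_two]

lemma starχAux (p) : star (χAux p) = χAux p := by unfold χAux; split <;> simp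

lemma c0r : (1 / (2 * Real.sqrt 2 : ℝ)) * (1 / (2 * Real.sqrt 2 : ℝ)) = 1/8 := by
  rw [div_mul_div_comm, mul_mul_mul_comm, Real.mul_self_sqrt (by norm_num)]
  norm_num

lemma c0sq : (((1 / (2 * Real.sqrt 2 : ℝ) : ℝ) : ℂ)) * ((1 / (2 * Real.sqrt 2 : ℝ) : ℝ) : ℂ) = 1/8 := by
  rw [← Complex.ofReal_mul, c0r]
  norm_num

lemma hpure (p q) : pureState ψSep p q = (1/8 : ℂ) * (χAux p * χAux q) := by
  show ψSep p * star (ψSep q) = _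
  rw [hval, hval, star_mul', starχAux, Complex.star_def, Complex.conj_ofReal]
  linear_combination (χAux p * χAux q) * c0sq

lemma hnorm : ∑ p, ‖ψSep p‖ ^ 2 = 1 := by
  have h8 : ∀ p, ‖ψSep p‖ ^ 2 = (1/8) * ‖χAux p‖^2 := by
    intro p
    rw [hval, norm_mul, mul_pow, Complex.norm_real, Real.norm_eq_abs, sq_abs]
    congr 1
    rw [sq, c0r]
  simp only [h8]
  rw [Fintype.sum_prod_type]
  simp [Fintype.sum_prod_type, Fin.sum_univ_two, χAux]
  norm_num

noncomputable def MAux : Matrix (Fin 2 × Fin 2) (Fin 2 × Fin 2) ℂ :=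
  Matrix.of fun p q => if p = q ∨ (p.1 ≠ q.1 ∧ p.2 ≠ q.2) then 1/4 else 0

lemma hρ12 : pt12 (pureState ψSep) = MAux := by
  ext p q
  fin_cases p <;> fin_cases q <;>
    simp [pt12, MAux, hpure, χAux, Fin.sum_univ_two, Prod.ext_iff] <;> norm_num

lemma hρ14 : pt14 (pureState ψSep) = (1 / 4 : ℂ) • (pureState u₁ + pureState u₂) := by
  ext p q
  simp only [pt14, Matrix.of_apply, hpure]
  fin_cases p <;> fin_cases q <;>
    simp [χAux, Fin.sum_univ_two, u₁, u₂, stdBasis, pureState, Prod.ext_iff] <;> norm_num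

lemma hMherm : MAux.IsHermitian := by
  unfold Matrix.IsHermitian
  ext p q
  fin_cases p <;> fin_cases q <;> simp [MAux, Prod.ext_iff]

lemma hM2 : MAux * MAux = (1/2 : ℂ) • MAux := by
  ext p q
  fin_cases p <;> fin_cases q <;>
    simp [Matrix.mul_apply, MAux, Fintype.sum_prod_type, Fin.sum_univ_two, Prod.ext_iff] <;> norm_num

lemma hMtr : MAux.trace = 1 := by
  simp [Matrix.trace, Matrix.diag, MAux, Fintype.sum_prod_type, Fin.sum_univ_two]

open Matrix in
lemma eig_quad (i : Fin 2 × Fin 2) : hMherm.eigenvalues i = 0 ∨ hMherm.eigenvalues i = 1/2 := by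
  set lam := hMherm.eigenvalues i with hlam
  have hv := hMherm.mulVec_eigenvectorBasis i
  have hvne : ∃ j, (hMherm.eigenvectorBasis i) j ≠ 0 := by
    by_contra hc
    push_neg at hc
    have h0 : hMherm.eigenvectorBasis i = 0 := by
      ext j; exact hc j
    have := hMherm.eigenvectorBasis.orthonormal.1 i
    rw [h0] at this; simp at this
  obtain ⟨j, hj⟩ := hvne
  have h2 := congrFun (congrArg (fun A => A *ᵥ ⇑(hMherm.eigenvectorBasis i)) hM2) j
  simp only [← Matrix.mulVec_mulVec, hv, Matrix.mulVec_smul, Matrix.smul_mulVec] at h2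
  have key : ((lam : ℂ) * (lam : ℂ)) * (hMherm.eigenvectorBasis i) j
      = ((1/2 : ℂ) * (lam : ℂ)) * (hMherm.eigenvectorBasis i) j := by
    simpa [Complex.real_smul, mul_assoc, mul_comm, mul_left_comm] using h2
  have hC : (lam : ℂ) * (lam : ℂ) = (1/2 : ℂ) * (lam : ℂ) := mul_right_cancel₀ hj key
  have hR : lam * lam = (1/2) * lam := by
    apply Complex.ofReal_injective
    push_cast
    exact hC
  have : lam * (lam - 1/2) = 0 := by ring_nf; linarith
  rcases mul_eq_zero.mp this with h | h
  · exact Or.inl h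
  · exact Or.inr (by linarith)

lemma eig_sum : hMherm.eigenvalues (0,0) + hMherm.eigenvalues (0,1) + hMherm.eigenvalues (1,0) + hMherm.eigenvalues (1,1) = 1 := by
  have h1 : MAux.trace = ∑ i, (hMherm.eigenvalues i : ℂ) := by
    nth_rewrite 1 [hMherm.spectral_theorem]
    rw [Unitary.conjStarAlgAut_apply, Matrix.trace_mul_comm, ← mul_assoc, Unitary.coe_star_mul_self, one_mul,
      Matrix.trace_diagonal]
    rfl
  rw [hMtr] at h1
  have h2 : ((hMherm.eigenvalues (0,0) + hMherm.eigenvalues (0,1) + hMherm.eigenvalues (1,0) + hMherm.eigenvalues (1,1) : ℝ) : ℂ) = 1 := by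
    push_cast
    rw [h1, Fintype.sum_prod_type]
    simp [Fin.sum_univ_two]
    ring
  exact_mod_cast h2

lemma msEq : Finset.univ.val.map hMherm.eigenvalues = ({1 / 2, 1 / 2, 0, 0} : Multiset ℝ) := by
  have huniv : (Finset.univ.val : Multiset (Fin 2 × Fin 2)) = {(0,0),(0,1),(1,0),(1,1)} := by decide
  rw [huniv]
  simp only [Multiset.insert_eq_cons, Multiset.map_cons, Multiset.map_singleton,
    ← Multiset.cons_zero]
  have hs := eig_sum
  rcases eig_quad (0,0) with h00 | h00 <;> rcases eig_quad (0,1) with h01 | h01 <;>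
    rcases eig_quad (1,0) with h10 | h10 <;> rcases eig_quad (1,1) with h11 | h11 <;>
    rw [h00, h01, h10, h11] at hs ⊢ <;>
    first
      | (exfalso; norm_num at hs; done)
      | ((repeat rw [Multiset.cons_swap (0:ℝ) (1/2)]); try rfl; done)

lemma entEq : vNEntropy MAux = Real.log 2 := by
  rw [vNEntropy, dif_pos hMherm]
  have h0 : ∑ i, hMherm.eigenvalues i * Real.log (hMherm.eigenvalues i)
      = ((Finset.univ.val.map hMherm.eigenvalues).map (fun x => x * Real.log x)).sum := by
    rw [Multiset.map_map]; rfl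
  rw [h0, msEq]
  simp only [Multiset.insert_eq_cons, Multiset.map_cons, Multiset.map_singleton,
    Multiset.sum_cons, Multiset.sum_singleton]
  rw [show (1/2 : ℝ) = 2⁻¹ by norm_num, Real.log_inv]
  ring

/-- For the unit vector
`ψ'' = (1/(2√2)) ∑_{a,b} (e_a⊗e_b⊗e_b⊗e_a + e_a⊗e_b⊗e_{b̄}⊗e_{ā})` in `(ℂ²)^{⊗4}`,
the reduced density matrix on factors (1,4) is the separable state
`¼ u₁u₁* + ¼ u₂u₂*` with `u₁ = e₀⊗e₀+e₁⊗e₁`, `u₂ = e₀⊗e₁+e₁⊗e₀`, and the reduced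
density matrix on factors (1,2) has exactly the nonzero eigenvalues `½, ½` (the remaining
eigenvalues being `0`), hence entropy `log 2`. -/
theorem separable_purification_entropy_log_two :
    (∑ p, ‖ψSep p‖ ^ 2 = 1) ∧
    pt14 (pureState ψSep) = (1 / 4 : ℂ) • (pureState u₁ + pureState u₂) ∧
    (∃ h : (pt12 (pureState ψSep)).IsHermitian,
        Finset.univ.val.map h.eigenvalues = ({1 / 2, 1 / 2, 0, 0} : Multiset ℝ)) ∧
    vNEntropy (pt12 (pureState ψSep)) = Real.log 2 := by
  refine ⟨hnorm, hρ14, ?_, ?_⟩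
  · rw [hρ12]
    exact ⟨hMherm, msEq⟩
  · rw [hρ12]
    exact entEq
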